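/- Let a, b, c be natural numbers with either a ≤ b ≤ c or a ≥ b ≥ c or (b ≥ a and b ≥ c and a = c). Then ⌊c/2⌋ - ⌊a/2⌋ ≤ max(b - a, c - b), where the subtractions and floors are computed in ℤ. Consequently, for the intermediate firing configuration F of quadrant-lattice chip-firing and its difference table F'(x,y) = F(x-1,y) - F(x,y-1), the maximum absolute value of the entries of F' in each row is weakly decreasing from row to row, i.e., |F'(x,y)| ≤ max(|F'(x-1,y)|, |F'(x,y-1)|) whenever the three consecutive row-(x+y-2) entries of F involved satisfy one of the monotonicity/symmetry patterns above. -/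
import Mathlib

theorem stmt12 :
    (∀ a b c : ℕ,
      ((a ≤ b ∧ b ≤ c) ∨ (c ≤ b ∧ b ≤ a) ∨ (a ≤ b ∧ c ≤ b ∧ a = c)) →
      (c : ℤ) / 2 - (a : ℤ) / 2 ≤ max ((b : ℤ) - (a : ℤ)) ((c : ℤ) - (b : ℤ))) ∧
    (∀ n : ℕ, ∀ F : ℤ → ℤ → ℕ,
      (∀ x y : ℤ, x < 0 ∨ y < 0 → F x y = 0) →
      F 0 0 = 2 ^ n →
      (∀ x y : ℤ, 0 ≤ x → 0 ≤ y → ¬(x = 0 ∧ y = 0) →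
        F x y = F (x - 1) y / 2 + F x (y - 1) / 2) →
      ∀ F' : ℤ → ℤ → ℤ,
      (∀ x y : ℤ, F' x y = (F (x - 1) y : ℤ) - (F x (y - 1) : ℤ)) →
      ∀ x y : ℤ, 1 ≤ x → 1 ≤ y →
      ((F x (y - 2) ≤ F (x - 1) (y - 1) ∧ F (x - 1) (y - 1) ≤ F (x - 2) y) ∨
       (F (x - 2) y ≤ F (x - 1) (y - 1) ∧ F (x - 1) (y - 1) ≤ F x (y - 2)) ∨
       (F x (y - 2) ≤ F (x - 1) (y - 1) ∧ F (x - 2) y ≤ F (x - 1) (y - 1) ∧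
         F x (y - 2) = F (x - 2) y)) →
      |F' x y| ≤ max |F' (x - 1) y| |F' x (y - 1)|) := by
  have key : ∀ a b c : ℕ,
      ((a ≤ b ∧ b ≤ c) ∨ (c ≤ b ∧ b ≤ a) ∨ (a ≤ b ∧ c ≤ b ∧ a = c)) →
      (c : ℤ) / 2 - (a : ℤ) / 2 ≤ max ((b : ℤ) - (a : ℤ)) ((c : ℤ) - (b : ℤ)) := by
    intro a b c h
    rw [le_max_iff]
    omega
  refine ⟨key, ?_⟩
  intro n F h0 hF00 hrec F' hF' x y hx hy hcase
  set a := F x (y - 2) with ha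
  set b := F (x - 1) (y - 1) with hb
  set c := F (x - 2) y with hc
  have e1 : F (x - 1) y = c / 2 + b / 2 := by
    have h := hrec (x - 1) y (by omega) (by omega) (by omega)
    have hxx : x - 1 - 1 = x - 2 := by ring
    rw [hxx] at h
    exact h
  have e2 : F x (y - 1) = b / 2 + a / 2 := by
    have h := hrec x (y - 1) (by omega) (by omega) (by omega)
    have hyy : y - 1 - 1 = y - 2 := by ring
    rw [hyy] at h
    exact h
  have g0 : F' x y = (c : ℤ) / 2 - (a : ℤ) / 2 := by
    rw [hF' x y, e1, e2]; omega
  have g1 : F' (x - 1) y = (c : ℤ) - (b : ℤ) := by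
    have h := hF' (x - 1) y
    have hxx : x - 1 - 1 = x - 2 := by ring
    rw [hxx] at h
    exact h
  have g2 : F' x (y - 1) = (b : ℤ) - (a : ℤ) := by
    have h := hF' x (y - 1)
    have hyy : y - 1 - 1 = y - 2 := by ring
    rw [hyy] at h
    exact h
  have key1 := key a b c hcase
  have key2 := key c b a (by omega)
  rw [g0, g1, g2]
  rw [abs_le]
  constructor
  · rw [neg_le, neg_sub, le_max_iff]
    have h1 : -((b : ℤ) - a) ≤ |(b : ℤ) - a| := neg_le_abs _
    have h2 : -((c : ℤ) - b) ≤ |(c : ℤ) - b| := neg_le_abs _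
    rw [le_max_iff] at key2
    omega
  · rw [le_max_iff] at key1
    rcases key1 with h | h
    · exact le_trans h (le_trans (le_abs_self _) (le_max_right _ _))
    · exact le_trans h (le_trans (le_abs_self _) (le_max_left _ _))
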